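/- If the two step ratios are equal, τ' = τ, and 0 < τ ≤ 1.0315, then β₃ − β₂ − β₁ > 0. (This is the coefficient positivity of the discrete time-derivative term used in the stability and error estimates of the variable-step BDF2-TF algorithm for step ratios 0 < τₙ ≤ 1.0315.) -/
import Mathlib


/-- BDF2-TF β-coefficients. -/
noncomputable def beta3 (τ τ' : ℝ) : ℝ :=
  1 + τ / (1 + τ) + τ * τ' / (1 + τ' * (1 + τ))
noncomputable def beta2 (τ τ' : ℝ) : ℝ :=
  τ ^ 2 / (1 + τ) + τ ^ 2 * τ' * (1 + τ' * (2 + τ)) / ((1 + τ') * (1 + τ' * (1 + τ)))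
noncomputable def beta1 (τ τ' : ℝ) : ℝ :=
  τ ^ 2 * τ' ^ 3 * (1 + τ) / ((1 + τ') * (1 + τ' * (1 + τ)))

/-- For equal step ratios `τ' = τ` with `0 < τ ≤ 1.0315`, the coefficient
`β₃ − β₂ − β₁` of the discrete time-derivative term is strictly positive. -/
theorem bdf2tf_time_derivative_coefficient_positive
    (τ τ' : ℝ) (heq : τ' = τ) (h0 : 0 < τ) (h1 : τ ≤ 1.0315) :
    0 < beta3 τ τ' - beta2 τ τ' - beta1 τ τ' := by
  rw [heq]
  have h2 : (0:ℝ) < 1 + τ := by linarith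
  have h3 : (0:ℝ) < 1 + τ * (1 + τ) := by nlinarith
  unfold beta3 beta2 beta1
  rw [show (0:ℝ) < 1 + τ / (1 + τ) + τ * τ / (1 + τ * (1 + τ)) -
      (τ ^ 2 / (1 + τ) + τ ^ 2 * τ * (1 + τ * (2 + τ)) / ((1 + τ) * (1 + τ * (1 + τ)))) -
      τ ^ 2 * τ ^ 3 * (1 + τ) / ((1 + τ) * (1 + τ * (1 + τ))) ↔ True from
    iff_true_intro ?_]
  · trivial
  · have key : (0:ℝ) < 1 + 3*τ + 3*τ^2 + τ^3 - 3*τ^4 - 2*τ^5 - τ^6 := by nlinarith [sq_nonneg τ, sq_nonneg (τ-1), sq_nonneg (τ^2), pow_pos h0 3, pow_pos h0 4]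
    have hD : (0:ℝ) < (1 + τ) * (1 + τ * (1 + τ)) := by positivity
    rw [show (1:ℝ) + τ / (1 + τ) + τ * τ / (1 + τ * (1 + τ)) -
      (τ ^ 2 / (1 + τ) + τ ^ 2 * τ * (1 + τ * (2 + τ)) / ((1 + τ) * (1 + τ * (1 + τ)))) -
      τ ^ 2 * τ ^ 3 * (1 + τ) / ((1 + τ) * (1 + τ * (1 + τ))) =
      (1 + 3*τ + 3*τ^2 + τ^3 - 3*τ^4 - 2*τ^5 - τ^6) / ((1 + τ) * (1 + τ * (1 + τ))) from by
        field_simp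
        ring]
    positivity
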